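/- (Dual interpretation of alternating projections.) Let K be a nonempty closed convex cone in ℝⁿ, let A ∈ ℝ^{m×n} with AAᵀ invertible, b ∈ ℝᵐ, c ∈ ℝⁿ, and 𝒜 = {x : Ax = b}. Define the dual gradient sequence by y₀ = 0 and, for k ≥ 0: x_{k+1} = proj_K(c + Aᵀy_k), y_{k+1} = y_k + (AAᵀ)⁻¹(b − Ax_{k+1}). Define the Dykstra sequence by z₀ = c and, for k ≥ 0: x'_{k+1} = proj_K(z_k), y'_{k+1} = proj_𝒜(x'_{k+1}), z_{k+1} = z_k − (x'_{k+1} − y'_{k+1}). Then for all k ≥ 0: z_k = c + Aᵀy_k, and hence x_{k+1} = x'_{k+1} for all k; i.e., the gradient ascent method on the dual function θ with constant metric W = (AAᵀ)⁻¹ and unit step size generates exactly the same primal iterates as the alternating projection method with Dykstra's correction. -/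

import Mathlib

open scoped Matrix

/-- Matrix-vector multiplication, viewed as a map between Euclidean spaces. -/
noncomputable def mulVecE {m n : ℕ} (A : Matrix (Fin m) (Fin n) ℝ)
    (x : EuclideanSpace ℝ (Fin n)) : EuclideanSpace ℝ (Fin m) :=
  WithLp.toLp 2 (A.mulVec x)

lemma mulVecE_sub {m n : ℕ} (A : Matrix (Fin m) (Fin n) ℝ) (x y : EuclideanSpace ℝ (Fin n)) :
    mulVecE A (x - y) = mulVecE A x - mulVecE A y := by
  ext i
  simp [mulVecE, Matrix.mulVec, dotProduct, mul_sub, Finset.sum_sub_distrib]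

lemma mulVecE_add {m n : ℕ} (A : Matrix (Fin m) (Fin n) ℝ) (x y : EuclideanSpace ℝ (Fin n)) :
    mulVecE A (x + y) = mulVecE A x + mulVecE A y := by
  ext i
  simp [mulVecE, Matrix.mulVec, dotProduct, mul_add, Finset.sum_add_distrib]

lemma mulVecE_comp {m n p : ℕ} (A : Matrix (Fin m) (Fin n) ℝ) (B : Matrix (Fin n) (Fin p) ℝ)
    (u : EuclideanSpace ℝ (Fin p)) :
    mulVecE A (mulVecE B u) = mulVecE (A * B) u := by
  simp [mulVecE, Matrix.mulVec_mulVec]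

lemma mulVecE_one {m : ℕ} (u : EuclideanSpace ℝ (Fin m)) :
    mulVecE (1 : Matrix (Fin m) (Fin m) ℝ) u = u := by
  simp [mulVecE, Matrix.one_mulVec]

lemma mulVecE_zero {m n : ℕ} (A : Matrix (Fin m) (Fin n) ℝ) :
    mulVecE A (0 : EuclideanSpace ℝ (Fin n)) = 0 := by
  ext i
  simp [mulVecE, Matrix.mulVec, dotProduct]

lemma inner_mulVecE_transpose {m n : ℕ} (A : Matrix (Fin m) (Fin n) ℝ)
    (u : EuclideanSpace ℝ (Fin m)) (d : EuclideanSpace ℝ (Fin n)) :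
    inner ℝ (mulVecE Aᵀ u) d = (inner ℝ u (mulVecE A d) : ℝ) := by
  simp [mulVecE, PiLp.inner_apply, Matrix.mulVec, dotProduct, Finset.mul_sum,
    Finset.sum_mul, Matrix.transpose_apply]
  rw [Finset.sum_comm]
  exact Finset.sum_congr rfl fun i _ => Finset.sum_congr rfl fun j _ => by ring

/-- Dual interpretation of alternating projections: the gradient ascent method on
the dual function `θ` with constant metric `W = (AAᵀ)⁻¹` and unit step size
generates exactly the same primal iterates as the alternating projection method
with Dykstra's correction; more precisely `z k = c + Aᵀ (y k)` for all `k`, and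
hence `x (k+1) = x' (k+1)` for all `k`. -/
theorem dual_gradient_eq_dykstra
    {m n : ℕ} (K : Set (EuclideanSpace ℝ (Fin n)))
    (hKne : K.Nonempty) (hKcl : IsClosed K) (hKconv : Convex ℝ K)
    (hKcone : ∀ x ∈ K, ∀ t : ℝ, 0 ≤ t → t • x ∈ K)
    (A : Matrix (Fin m) (Fin n) ℝ) (hA : IsUnit (A * Aᵀ))
    (b : EuclideanSpace ℝ (Fin m)) (c : EuclideanSpace ℝ (Fin n))
    (Aff : Set (EuclideanSpace ℝ (Fin n)))
    (hAff : Aff = {x | mulVecE A x = b})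
    (projK projAff : EuclideanSpace ℝ (Fin n) → EuclideanSpace ℝ (Fin n))
    (hprojK : ∀ w, projK w ∈ K ∧ ∀ v ∈ K, ‖w - projK w‖ ≤ ‖w - v‖)
    (hprojAff : ∀ w, projAff w ∈ Aff ∧ ∀ v ∈ Aff, ‖w - projAff w‖ ≤ ‖w - v‖)
    (y : ℕ → EuclideanSpace ℝ (Fin m))
    (x x' y' z : ℕ → EuclideanSpace ℝ (Fin n))
    (hy0 : y 0 = 0)
    (hx : ∀ k, x (k + 1) = projK (c + mulVecE Aᵀ (y k)))
    (hy : ∀ k, y (k + 1) = y k + mulVecE (A * Aᵀ)⁻¹ (b - mulVecE A (x (k + 1))))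
    (hz0 : z 0 = c)
    (hx' : ∀ k, x' (k + 1) = projK (z k))
    (hy' : ∀ k, y' (k + 1) = projAff (x' (k + 1)))
    (hz : ∀ k, z (k + 1) = z k - (x' (k + 1) - y' (k + 1))) :
    (∀ k, z k = c + mulVecE Aᵀ (y k)) ∧ ∀ k, x (k + 1) = x' (k + 1) := by
  have hAAinv : (A * Aᵀ) * (A * Aᵀ)⁻¹ = 1 :=
    Matrix.mul_nonsing_inv _ ((Matrix.isUnit_iff_isUnit_det _).mp hA)
  -- explicit formula for the affine projection
  have hformula : ∀ w, projAff w = w - mulVecE Aᵀ (mulVecE (A * Aᵀ)⁻¹ (mulVecE A w - b)) := by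
    intro w
    set u : EuclideanSpace ℝ (Fin m) := mulVecE (A * Aᵀ)⁻¹ (mulVecE A w - b) with hu
    set q : EuclideanSpace ℝ (Fin n) := w - mulVecE Aᵀ u with hqdef
    have hAq : mulVecE A q = b := by
      rw [hqdef, mulVecE_sub, mulVecE_comp, hu, mulVecE_comp, hAAinv, mulVecE_one]
      abel
    have hqAff : q ∈ Aff := by rw [hAff]; exact hAq
    set p : EuclideanSpace ℝ (Fin n) := projAff w with hp
    have hpAff : p ∈ Aff := (hprojAff w).1
    have hAp : mulVecE A p = b := by rw [hAff] at hpAff; exact hpAff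
    have horth : (inner ℝ (w - q) (q - p) : ℝ) = 0 := by
      have hwq : w - q = mulVecE Aᵀ u := by rw [hqdef]; abel
      rw [hwq, inner_mulVecE_transpose, mulVecE_sub, hAq, hAp, sub_self, inner_zero_right]
    have hle : ‖w - p‖ ≤ ‖w - q‖ := (hprojAff w).2 q hqAff
    have hsq : ‖w - p‖ ^ 2 = ‖w - q‖ ^ 2 + ‖q - p‖ ^ 2 := by
      have hdecomp : w - p = (w - q) + (q - p) := by abel
      rw [hdecomp, norm_add_sq_real, horth]; ring
    have hzero : ‖q - p‖ = 0 := by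
      nlinarith [norm_nonneg (w - p), norm_nonneg (w - q), norm_nonneg (q - p)]
    exact (sub_eq_zero.mp (norm_eq_zero.mp hzero)).symm
  -- the main invariant, by induction
  have main : ∀ k, z k = c + mulVecE Aᵀ (y k) := by
    intro k
    induction k with
    | zero => rw [hz0, hy0, mulVecE_zero, add_zero]
    | succ k ih =>
      have hxx : x' (k + 1) = x (k + 1) := by rw [hx' k, ih, hx k]
      have hy'k : y' (k + 1) = x' (k + 1) -
          mulVecE Aᵀ (mulVecE (A * Aᵀ)⁻¹ (mulVecE A (x' (k + 1)) - b)) := by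
        rw [hy' k, hformula]
      rw [hz k, hy'k, ih, hy k, hxx]
      simp only [mulVecE_add, mulVecE_sub]
      abel
  refine ⟨main, fun k => ?_⟩
  rw [hx k, hx' k, main k]
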